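/- There exists a constant θ > 0, depending only on D, such that for every α ∈ B∞(λ), dist(α, Ω*) ≤ θ‖Dᵀα − s*‖, where s* is the common value of Dᵀα* over all α* ∈ Ω*. -/

import Mathlib

open scoped RealInnerProductSpace
open Matrix

set_option linter.unusedSectionVars false
set_option linter.unusedVariables false
set_option maxHeartbeats 1000000

/-- The ℓ∞-ball of radius `lam` in `ℝ^m`. -/
def BinfBall (m : ℕ) (lam : ℝ) : Set (EuclideanSpace ℝ (Fin m)) :=
  {a | ∀ i, |a i| ≤ lam}

section Cone
variable {E : Type*} [NormedAddCommGroup E] [InnerProductSpace ℝ E] [FiniteDimensional ℝ E]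

/-- The cone generated (with nonnegative coefficients) by a finite set. -/
def coneOf (s : Finset E) : Set E :=
  {x | ∃ c : E → ℝ, (∀ g ∈ s, 0 ≤ c g) ∧ ∑ g ∈ s, c g • g = x}

noncomputable def sumMap (s : Finset E) : (↥s → ℝ) →ₗ[ℝ] E where
  toFun c := ∑ g : ↥s, c g • (g : E)
  map_add' a b := by simp [add_smul, Finset.sum_add_distrib]
  map_smul' r a := by simp [smul_smul, Finset.smul_sum]

lemma sumMap_inj (s : Finset E) (hs : LinearIndependent ℝ ((↑) : ↥s → E)) :
    Function.Injective (sumMap s) := by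
  intro a b hab
  have h0 : sumMap s (a - b) = 0 := by rw [map_sub, hab, sub_self]
  have := Fintype.linearIndependent_iff.mp hs (a - b) h0
  funext i
  have hi := this i
  simpa [sub_eq_zero] using hi

lemma coneOf_eq_image (s : Finset E) :
    coneOf s = (sumMap s) '' {c | ∀ i, 0 ≤ c i} := by
  classical
  ext x
  constructor
  · rintro ⟨c, hc, rfl⟩
    refine ⟨fun g => c g, fun g => hc g g.2, ?_⟩
    simp only [sumMap, LinearMap.coe_mk, AddHom.coe_mk]
    rw [← Finset.sum_coe_sort s (fun g => c g • g)]
    rfl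
  · rintro ⟨c, hc, rfl⟩
    refine ⟨fun g => if h : g ∈ s then c ⟨g, h⟩ else 0, ?_, ?_⟩
    · intro g hg
      simp only [dif_pos hg]
      exact hc _
    · simp only [sumMap, LinearMap.coe_mk, AddHom.coe_mk]
      rw [← Finset.sum_coe_sort s (fun g => (if h : g ∈ s then c ⟨g, h⟩ else 0) • g)]
      exact Finset.sum_congr rfl fun g _ => by rw [dif_pos g.2]

lemma isClosed_coneOf (s : Finset E) (hs : LinearIndependent ℝ ((↑) : ↥s → E)) :
    IsClosed (coneOf s) := by
  obtain ⟨K, -, hK⟩ := (sumMap s).injective_iff_antilipschitz.mp (sumMap_inj s hs)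
  have hu : UniformContinuous (sumMap s) :=
    (LinearMap.toContinuousLinearMap (sumMap s)).uniformContinuous
  rw [coneOf_eq_image]
  refine (hK.isClosedEmbedding hu).isClosedMap _ ?_
  have : {c : ↥s → ℝ | ∀ i, 0 ≤ c i} = ⋂ i, {c | 0 ≤ c i} := by
    ext c; simp [Set.mem_iInter]
  rw [this]
  exact isClosed_iInter fun i => isClosed_le continuous_const (continuous_apply i)

lemma sum_le_norm_of_indep (s : Finset E) (hs : LinearIndependent ℝ ((↑) : ↥s → E)) :
    ∃ θ : ℝ, 0 < θ ∧ ∀ c : E → ℝ, (∀ g ∈ s, 0 ≤ c g) →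
      (∑ g ∈ s, c g) ≤ θ * ‖∑ g ∈ s, c g • g‖ := by
  obtain ⟨K, hK0, hK⟩ := (sumMap s).injective_iff_antilipschitz.mp (sumMap_inj s hs)
  refine ⟨(s.card + 1) * K, by positivity, fun c hc => ?_⟩
  set c' : ↥s → ℝ := fun g => c g with hc'
  have h1 : (∑ g ∈ s, c g) = ∑ g : ↥s, c' g := (Finset.sum_coe_sort s c).symm
  have h2 : (∑ g ∈ s, c g • g) = sumMap s c' := by
    simp only [sumMap, LinearMap.coe_mk, AddHom.coe_mk]
    exact (Finset.sum_coe_sort s (fun g => c g • g)).symm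
  have h3 : ∀ g : ↥s, c' g ≤ ‖c'‖ := fun g =>
    (le_abs_self _).trans (by simpa using norm_le_pi_norm c' g)
  have h4 : ‖c'‖ ≤ K * ‖sumMap s c'‖ := by
    have := hK.le_mul_dist c' 0
    simpa [dist_eq_norm] using this
  calc (∑ g ∈ s, c g) = ∑ g : ↥s, c' g := h1
    _ ≤ ∑ _g : ↥s, ‖c'‖ := Finset.sum_le_sum fun g _ => h3 g
    _ = s.card * ‖c'‖ := by simp [mul_comm]
    _ ≤ s.card * (K * ‖sumMap s c'‖) := by
        refine mul_le_mul_of_nonneg_left h4 (by positivity)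
    _ ≤ (s.card + 1) * (K * ‖sumMap s c'‖) := by
        refine mul_le_mul_of_nonneg_right (by linarith) ?_
        positivity
    _ = (s.card + 1) * K * ‖∑ g ∈ s, c g • g‖ := by rw [h2]; ring


lemma coneOf_mono {s t : Finset E} (h : s ⊆ t) : coneOf s ⊆ coneOf t := by
  classical
  rintro x ⟨c, hc, rfl⟩
  refine ⟨fun g => if g ∈ s then c g else 0, fun g _ => ?_, ?_⟩
  · simp only []
    split
    · exact hc g ‹_›
    · exact le_refl 0
  · rw [← Finset.sum_subset h]
    · exact Finset.sum_congr rfl fun g hg => by simp only [if_pos hg]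
    · intro g _ hgs
      simp only [if_neg hgs, zero_smul]

lemma caratheodory_cone (G : Finset E) :
    ∀ x ∈ coneOf G, ∃ s, s ⊆ G ∧ LinearIndependent ℝ ((↑) : ↥s → E) ∧ x ∈ coneOf s := by
  classical
  induction G using Finset.strongInduction with
  | _ G ih =>
    rintro x ⟨c, hc, hsum⟩
    set G₁ := G.filter (fun g => c g ≠ 0) with hG₁def
    have hsub : G₁ ⊆ G := Finset.filter_subset _ _
    have hsum1 : ∑ g ∈ G₁, c g • g = x := by
      rw [← hsum]
      exact Finset.sum_filter_of_ne (fun g _ h => fun hc0 => h (by rw [hc0, zero_smul]))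
    by_cases hind : LinearIndependent ℝ ((↑) : ↥G₁ → E)
    · exact ⟨G₁, hsub, hind, c, fun g hg => hc g (hsub hg), hsum1⟩
    · obtain ⟨dc, hdsum, i₀, hi₀⟩ := Fintype.not_linearIndependent_iff.mp hind
      -- build a relation d : E → ℝ supported on G₁ having a positive value
      have key : ∃ d : E → ℝ, (∀ g, g ∉ G₁ → d g = 0) ∧ (∑ g ∈ G₁, d g • g = 0) ∧
          ∃ g ∈ G₁, 0 < d g := by
        by_cases hpos : ∃ i : ↥G₁, 0 < dc i
        · obtain ⟨i, hi⟩ := hpos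
          refine ⟨fun g => if h : g ∈ G₁ then dc ⟨g, h⟩ else 0, fun g hg => dif_neg hg, ?_,
            ⟨i, i.2, by simp only [dif_pos i.2, Subtype.coe_eta]; exact hi⟩⟩
          rw [← Finset.sum_coe_sort G₁ (fun g => (if h : g ∈ G₁ then dc ⟨g, h⟩ else 0) • g),
            ← hdsum]
          exact Finset.sum_congr rfl fun g _ => by
            simp only [dif_pos g.2, Subtype.coe_eta]
        · push_neg at hpos
          refine ⟨fun g => if h : g ∈ G₁ then -dc ⟨g, h⟩ else 0, fun g hg => dif_neg hg, ?_,
            ⟨i₀, i₀.2, by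
              simp only [dif_pos i₀.2, Subtype.coe_eta]
              have := hpos i₀
              cases lt_or_eq_of_le this with
              | inl h => simpa using h
              | inr h => exact absurd h hi₀⟩⟩
          rw [← Finset.sum_coe_sort G₁ (fun g => (if h : g ∈ G₁ then -dc ⟨g, h⟩ else 0) • g)]
          have : ∀ g : ↥G₁, (if h : (g : E) ∈ G₁ then -dc ⟨g, h⟩ else 0) • (g : E)
              = -(dc g • (g : E)) := fun g => by simp only [dif_pos g.2, Subtype.coe_eta, neg_smul]
          rw [Finset.sum_congr rfl fun g _ => this g, Finset.sum_neg_distrib, hdsum, neg_zero]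
      obtain ⟨d, hd0, hdsum0, g₁, hg₁, hg₁pos⟩ := key
      set P := G₁.filter (fun g => 0 < d g) with hPdef
      have hPne : P.Nonempty := ⟨g₁, Finset.mem_filter.mpr ⟨hg₁, hg₁pos⟩⟩
      set t := P.inf' hPne (fun g => c g / d g) with htdef
      obtain ⟨g₀, hg₀P, hg₀min⟩ := Finset.exists_mem_eq_inf' hPne (fun g => c g / d g)
      have hg₀G₁ : g₀ ∈ G₁ := (Finset.mem_filter.mp hg₀P).1
      have hg₀d : 0 < d g₀ := (Finset.mem_filter.mp hg₀P).2
      have ht0 : 0 ≤ t := Finset.le_inf' hPne _ fun g hg =>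
        div_nonneg (hc g (hsub (Finset.mem_filter.mp hg).1)) (Finset.mem_filter.mp hg).2.le
      set c' : E → ℝ := fun g => c g - t * d g with hc'def
      have hc'0 : ∀ g ∈ G, 0 ≤ c' g := by
        intro g hg
        by_cases hgP : g ∈ P
        · have hdg : 0 < d g := (Finset.mem_filter.mp hgP).2
          have : t ≤ c g / d g := Finset.inf'_le _ hgP
          have := (le_div_iff₀ hdg).mp this
          simp only [hc'def]
          linarith
        · have hdg : d g ≤ 0 := by
            by_cases hgG₁ : g ∈ G₁
            · by_contra h
              push_neg at h
              exact hgP (Finset.mem_filter.mpr ⟨hgG₁, h⟩)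
            · rw [hd0 g hgG₁]
          have : 0 ≤ c g := hc g hg
          have : 0 ≤ -(t * d g) := by
            rw [neg_nonneg]
            exact mul_nonpos_of_nonneg_of_nonpos ht0 hdg
          simp only [hc'def]
          linarith [hc g hg]
      have hc'g₀ : c' g₀ = 0 := by
        simp only [hc'def]
        rw [htdef, hg₀min]
        field_simp
        ring
      have hsum' : ∑ g ∈ G.erase g₀, c' g • g = x := by
        rw [Finset.sum_erase _ (by rw [hc'g₀, zero_smul])]
        have hdd : ∑ g ∈ G, d g • g = 0 := by
          rw [← Finset.sum_subset hsub (fun g _ hgnG₁ => by rw [hd0 g hgnG₁, zero_smul])]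
          exact hdsum0
        calc ∑ g ∈ G, c' g • g = (∑ g ∈ G, c g • g) - t • (∑ g ∈ G, d g • g) := by
              rw [Finset.smul_sum, ← Finset.sum_sub_distrib]
              exact Finset.sum_congr rfl fun g _ => by
                rw [hc'def]; rw [sub_smul, smul_smul]
          _ = x := by rw [hdd, smul_zero, sub_zero, hsum]
      obtain ⟨s, hsG, hind', hx'⟩ := ih (G.erase g₀) (Finset.erase_ssubset (hsub hg₀G₁)) x
        ⟨c', fun g hg => hc'0 g (Finset.erase_subset _ _ hg), hsum'⟩
      exact ⟨s, hsG.trans (Finset.erase_subset _ _), hind', hx'⟩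


lemma self_mem_coneOf {G : Finset E} {g : E} (hg : g ∈ G) : g ∈ coneOf G := by
  classical
  refine ⟨fun h => if h = g then 1 else 0, fun h _ => by dsimp only; split <;> norm_num, ?_⟩
  rw [Finset.sum_eq_single g]
  · simp
  · intro h _ hne
    simp [if_neg hne]
  · intro h
    exact absurd hg h

lemma zero_mem_coneOf (G : Finset E) : (0 : E) ∈ coneOf G :=
  ⟨fun _ => 0, fun _ _ => le_refl 0, by simp⟩

lemma isClosed_coneOf' (G : Finset E) : IsClosed (coneOf G) := by
  classical
  have : coneOf G = ⋃ s ∈ {s : Finset E | s ⊆ G ∧ LinearIndependent ℝ ((↑) : ↥s → E)},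
      coneOf s := by
    ext x
    constructor
    · intro hx
      obtain ⟨s, hsG, hind, hxs⟩ := caratheodory_cone G x hx
      exact Set.mem_biUnion ⟨hsG, hind⟩ hxs
    · intro hx
      obtain ⟨s, hs, hxs⟩ := Set.mem_iUnion₂.mp hx
      exact coneOf_mono hs.1 hxs
  rw [this]
  refine Set.Finite.isClosed_biUnion ?_ fun s hs => isClosed_coneOf s hs.2
  exact Set.Finite.subset (Set.finite_Iic G) fun s hs => by
    simpa [Finset.le_iff_subset] using hs.1

/-- The cone generated by `G` as a convex cone. -/
noncomputable def coneOfCone (G : Finset E) : ConvexCone ℝ E where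
  carrier := coneOf G
  smul_mem' := by
    rintro t ht x ⟨c, hc, rfl⟩
    refine ⟨fun g => t * c g, fun g hg => mul_nonneg ht.le (hc g hg), ?_⟩
    rw [Finset.smul_sum]
    exact Finset.sum_congr rfl fun g _ => by rw [mul_smul]
  add_mem' := by
    rintro x ⟨c, hc, rfl⟩ y ⟨c', hc', rfl⟩
    refine ⟨fun g => c g + c' g, fun g hg => add_nonneg (hc g hg) (hc' g hg), ?_⟩
    rw [← Finset.sum_add_distrib]
    exact Finset.sum_congr rfl fun g _ => by rw [add_smul]

/-- Farkas: if `⟪v, w⟫ ≥ 0` whenever `⟪g, w⟫ ≥ 0` for all `g ∈ G`, then `v` is a nonnegative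
combination of elements of `G`. -/
lemma mem_coneOf_of_dual [CompleteSpace E] (G : Finset E) (v : E)
    (hv : ∀ w : E, (∀ g ∈ G, 0 ≤ ⟪g, w⟫) → 0 ≤ ⟪v, w⟫) : v ∈ coneOf G := by
  by_contra hvG
  obtain ⟨f, u, hfu, hux⟩ := geometric_hahn_banach_closed_point
    (show Convex ℝ (coneOf G) from (coneOfCone G).convex) (isClosed_coneOf' G) hvG
  have h0 : 0 < u := by simpa using hfu 0 (zero_mem_coneOf G)
  have hle : ∀ a ∈ coneOf G, f a ≤ 0 := by
    intro a ha
    by_contra hpos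
    push_neg at hpos
    have hmem : (u / f a) • a ∈ coneOf G :=
      (coneOfCone G).smul_mem (div_pos h0 hpos) (show a ∈ coneOfCone G from ha)
    have := hfu _ hmem
    rw [map_smul, smul_eq_mul, div_mul_cancel₀ _ hpos.ne'] at this
    exact lt_irrefl _ this
  set w := -(InnerProductSpace.toDual ℝ E).symm f with hwdef
  have hw : ∀ y, ⟪y, w⟫ = -f y := by
    intro y
    rw [hwdef, inner_neg_right, real_inner_comm, InnerProductSpace.toDual_symm_apply]
  have := hv w fun g hg => by rw [hw]; linarith [hle g (self_mem_coneOf hg)]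
  rw [hw] at this
  linarith

/-- Uniform bound over all linearly independent subsets of a fixed finite set `U`. -/
lemma uniform_sum_le_norm (U : Finset E) :
    ∃ θ : ℝ, 0 < θ ∧ ∀ s : Finset E, s ⊆ U → LinearIndependent ℝ ((↑) : ↥s → E) →
      ∀ c : E → ℝ, (∀ g ∈ s, 0 ≤ c g) → (∑ g ∈ s, c g) ≤ θ * ‖∑ g ∈ s, c g • g‖ := by
  classical
  have hch : ∀ s : Finset E, ∃ θ : ℝ, 0 ≤ θ ∧
      (LinearIndependent ℝ ((↑) : ↥s → E) →
        ∀ c : E → ℝ, (∀ g ∈ s, 0 ≤ c g) → (∑ g ∈ s, c g) ≤ θ * ‖∑ g ∈ s, c g • g‖) := by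
    intro s
    by_cases h : LinearIndependent ℝ ((↑) : ↥s → E)
    · obtain ⟨θ, hθ0, hθ⟩ := sum_le_norm_of_indep s h
      exact ⟨θ, hθ0.le, fun _ => hθ⟩
    · exact ⟨0, le_refl 0, fun h' => absurd h' h⟩
  choose F hF0 hF using hch
  refine ⟨1 + ∑ s ∈ U.powerset, F s, ?_, fun s hsU hind c hc => ?_⟩
  · have : 0 ≤ ∑ s ∈ U.powerset, F s := Finset.sum_nonneg fun t _ => hF0 t
    linarith
  have h1 : F s ≤ 1 + ∑ t ∈ U.powerset, F t := by
    have : F s ≤ ∑ t ∈ U.powerset, F t :=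
      Finset.single_le_sum (fun t _ => hF0 t) (Finset.mem_powerset.mpr hsU)
    linarith
  calc (∑ g ∈ s, c g) ≤ F s * ‖∑ g ∈ s, c g • g‖ := hF s hind c hc
    _ ≤ (1 + ∑ t ∈ U.powerset, F t) * ‖∑ g ∈ s, c g • g‖ :=
        mul_le_mul_of_nonneg_right h1 (norm_nonneg _)

end Cone

lemma hoffman_bound (m d : ℕ) (hm : 0 < m) (D : Matrix (Fin m) (Fin d) ℝ)
    (lam : ℝ) (hlam : 0 < lam) (s : EuclideanSpace ℝ (Fin d))
    (Ω : Set (EuclideanSpace ℝ (Fin m)))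
    (hΩeq : Ω = {a | a ∈ BinfBall m lam ∧ Matrix.toEuclideanLin (𝕜 := ℝ) Dᵀ a = s}) :
    ∃ θ : ℝ, 0 < θ ∧ ∀ a ∈ BinfBall m lam,
      Metric.infDist a Ω ≤ θ * ‖Matrix.toEuclideanLin (𝕜 := ℝ) Dᵀ a - s‖ := by
  classical
  set T := Matrix.toEuclideanLin (𝕜 := ℝ) Dᵀ with hT
  set u : Fin d → EuclideanSpace ℝ (Fin m) :=
    fun j => (WithLp.equiv 2 (Fin m → ℝ)).symm (fun k => D k j) with hu
  set e : Fin m → EuclideanSpace ℝ (Fin m) := fun i => EuclideanSpace.single i (1:ℝ) with he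
  have hinner_u : ∀ (j : Fin d) (w : EuclideanSpace ℝ (Fin m)), ⟪u j, w⟫ = (T w) j := by
    intro j w
    rw [hu, hT]
    simp [PiLp.inner_apply, RCLike.inner_apply, Matrix.toEuclideanLin_apply, Matrix.mulVec,
      dotProduct, mul_comm, Matrix.transpose_apply]
  have hinner_e : ∀ (i : Fin m) (w : EuclideanSpace ℝ (Fin m)), ⟪e i, w⟫ = w i := by
    intro i w
    simp [he, EuclideanSpace.inner_single_left]
  have habs : ∀ (x : EuclideanSpace ℝ (Fin d)) (j : Fin d), |x j| ≤ ‖x‖ := by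
    intro x j
    have h := abs_real_inner_le_norm (EuclideanSpace.single j (1:ℝ)) x
    simpa [EuclideanSpace.inner_single_left, EuclideanSpace.norm_single] using h
  set U : Finset (EuclideanSpace ℝ (Fin m)) :=
    ((Finset.univ.image u ∪ Finset.univ.image fun j => -u j) ∪ Finset.univ.image e) ∪
      Finset.univ.image (fun i => -e i) with hU
  obtain ⟨θ, hθ0, hθ⟩ := uniform_sum_le_norm U
  refine ⟨θ, hθ0, fun a ha => ?_⟩
  by_cases hne : Ω.Nonempty
  swap
  · rw [Set.not_nonempty_iff_eq_empty] at hne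
    rw [hne]
    simpa [Metric.infDist_empty] using mul_nonneg hθ0.le (norm_nonneg _)
  have hB_convex : Convex ℝ (BinfBall m lam) := by
    intro x hx y hy α β hα hβ hαβ i
    have hix : (α • x + β • y) i = α * x i + β * y i := rfl
    rw [hix]
    calc |α * x i + β * y i| ≤ |α * x i| + |β * y i| := abs_add_le _ _
      _ = α * |x i| + β * |y i| := by rw [abs_mul, abs_mul, abs_of_nonneg hα, abs_of_nonneg hβ]
      _ ≤ α * lam + β * lam :=
          add_le_add (mul_le_mul_of_nonneg_left (hx i) hα) (mul_le_mul_of_nonneg_left (hy i) hβ)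
      _ = lam := by rw [← add_mul, hαβ, one_mul]
  have hB_closed : IsClosed (BinfBall m lam) := by
    have hBi : BinfBall m lam = ⋂ i, {a : EuclideanSpace ℝ (Fin m) | |a i| ≤ lam} := by
      ext b; simp [BinfBall, Set.mem_iInter]
    rw [hBi]
    refine isClosed_iInter fun i => ?_
    have hcont : Continuous fun b : EuclideanSpace ℝ (Fin m) => |b i| :=
      ((EuclideanSpace.proj (𝕜 := ℝ) i).continuous).abs
    exact isClosed_le hcont continuous_const
  have hTcont : Continuous T := LinearMap.continuous_of_finiteDimensional T
  have hΩ_closed : IsClosed Ω := by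
    rw [hΩeq]
    exact hB_closed.inter (IsClosed.preimage hTcont (isClosed_singleton (x := s)))
  have hΩ_convex : Convex ℝ Ω := by
    rw [hΩeq]
    intro x hx y hy α β hα hβ hαβ
    refine ⟨hB_convex hx.1 hy.1 hα hβ hαβ, ?_⟩
    rw [map_add, LinearMap.map_smul, LinearMap.map_smul, hx.2, hy.2, ← add_smul, hαβ, one_smul]
  obtain ⟨y, hyΩ, hproj⟩ :=
    exists_norm_eq_iInf_of_complete_convex hne hΩ_closed.isComplete hΩ_convex a
  have hvar : ∀ z ∈ Ω, ⟪a - y, z - y⟫ ≤ 0 :=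
    (norm_eq_iInf_iff_real_inner_le_zero hΩ_convex hyΩ).mp hproj
  have hyΩ' := hyΩ
  rw [hΩeq] at hyΩ'
  obtain ⟨hyB, hyT⟩ := hyΩ'
  set G : Finset (EuclideanSpace ℝ (Fin m)) :=
    ((Finset.univ.image u ∪ Finset.univ.image fun j => -u j) ∪
      ((Finset.univ.filter fun i => y i = lam).image e)) ∪
      ((Finset.univ.filter fun i => y i = -lam).image fun i => -e i) with hG
  have hGU : G ⊆ U := by
    rw [hG, hU]
    refine Finset.union_subset_union ?_ (Finset.image_subset_image (Finset.filter_subset _ _))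
    exact Finset.union_subset_union le_rfl (Finset.image_subset_image (Finset.filter_subset _ _))
  have hmemu : ∀ j : Fin d, u j ∈ G := fun j =>
    Finset.mem_union_left _ (Finset.mem_union_left _
      (Finset.mem_union_left _ (Finset.mem_image_of_mem u (Finset.mem_univ j))))
  have hmemu' : ∀ j : Fin d, -u j ∈ G := fun j =>
    Finset.mem_union_left _ (Finset.mem_union_left _
      (Finset.mem_union_right _ (Finset.mem_image_of_mem _ (Finset.mem_univ j))))
  have hmeme : ∀ i : Fin m, y i = lam → e i ∈ G := fun i hi =>
    Finset.mem_union_left _ (Finset.mem_union_right _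
      (Finset.mem_image_of_mem e (Finset.mem_filter.mpr ⟨Finset.mem_univ i, hi⟩)))
  have hmeme' : ∀ i : Fin m, y i = -lam → -e i ∈ G := fun i hi =>
    Finset.mem_union_right _
      (Finset.mem_image_of_mem _ (Finset.mem_filter.mpr ⟨Finset.mem_univ i, hi⟩))
  -- the tangent-cone claim
  have claim : ∀ w : EuclideanSpace ℝ (Fin m), (∀ g ∈ G, ⟪g, w⟫ ≤ 0) → ⟪a - y, w⟫ ≤ 0 := by
    intro w hw
    have hTw : T w = 0 := by
      have hj : ∀ j, (T w) j = 0 := by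
        intro j
        have h1 := hw (u j) (hmemu j)
        have h2 := hw (-u j) (hmemu' j)
        rw [hinner_u] at h1
        rw [inner_neg_left, hinner_u] at h2
        linarith
      ext j
      simpa using hj j
    have hup : ∀ i, y i = lam → w i ≤ 0 := fun i hi => by
      have h := hw (e i) (hmeme i hi)
      rwa [hinner_e] at h
    have hdown : ∀ i, y i = -lam → 0 ≤ w i := fun i hi => by
      have h := hw (-e i) (hmeme' i hi)
      rw [inner_neg_left, hinner_e] at h
      linarith
    have hnem : Nonempty (Fin m) := ⟨⟨0, hm⟩⟩
    set tf : Fin m → ℝ := fun i =>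
      if w i = 0 then 1 else
        (if |y i| < lam then (lam - |y i|) / |w i| else 2 * lam / |w i|) with htf
    set t := Finset.univ.inf' Finset.univ_nonempty tf with ht
    have htpos : 0 < t := by
      rw [ht, Finset.lt_inf'_iff]
      intro i _
      rw [htf]
      dsimp only
      split
      · norm_num
      · have hwabs : 0 < |w i| := abs_pos.mpr ‹_›
        split
        · exact div_pos (by linarith) hwabs
        · exact div_pos (by linarith) hwabs
    have htle : ∀ i, t ≤ tf i := fun i => Finset.inf'_le _ (Finset.mem_univ i)
    set z := y + t • w with hz
    have hzΩ : z ∈ Ω := by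
      rw [hΩeq]
      constructor
      · intro i
        have hzi : z i = y i + t * w i := rfl
        rw [hzi]
        by_cases hwi : w i = 0
        · rw [hwi, mul_zero, add_zero]; exact hyB i
        · have hwabs : 0 < |w i| := abs_pos.mpr hwi
          have hti := htle i
          rw [htf] at hti
          dsimp only at hti
          rw [if_neg hwi] at hti
          by_cases hyi : |y i| < lam
          · rw [if_pos hyi] at hti
            have h2 : t * |w i| ≤ lam - |y i| := (le_div_iff₀ hwabs).mp hti
            calc |y i + t * w i| ≤ |y i| + |t * w i| := abs_add_le _ _
              _ = |y i| + t * |w i| := by rw [abs_mul, abs_of_nonneg htpos.le]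
              _ ≤ lam := by linarith
          · rw [if_neg hyi] at hti
            have hyeq : |y i| = lam := le_antisymm (hyB i) (not_lt.mp hyi)
            have ht2 : t * |w i| ≤ 2 * lam := (le_div_iff₀ hwabs).mp hti
            rcases (abs_eq hlam.le).mp hyeq with hcase | hcase
            · have hwneg : w i ≤ 0 := hup i hcase
              have habsw : |w i| = -w i := abs_of_nonpos hwneg
              rw [hcase, abs_le]
              constructor <;> nlinarith
            · have hwpos : 0 ≤ w i := hdown i hcase
              have habsw : |w i| = w i := abs_of_nonneg hwpos
              rw [hcase, abs_le]
              constructor <;> nlinarith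
      · rw [hz, map_add, LinearMap.map_smul, hyT, hTw, smul_zero, add_zero]
    have hv := hvar z hzΩ
    have hzy : z - y = t • w := by rw [hz, add_sub_cancel_left]
    rw [hzy, real_inner_smul_right] at hv
    nlinarith
  have hdual : ∀ w : EuclideanSpace ℝ (Fin m),
      (∀ g ∈ G, 0 ≤ ⟪g, w⟫) → 0 ≤ ⟪a - y, w⟫ := by
    intro w hw
    have h := claim (-w) (fun g hg => by rw [inner_neg_right]; linarith [hw g hg])
    rw [inner_neg_right] at h
    linarith
  have hmem := mem_coneOf_of_dual G (a - y) hdual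
  obtain ⟨s', hs'G, hind, c, hc0, hcsum⟩ := caratheodory_cone G (a - y) hmem
  have hip : ∀ g ∈ G, ⟪g, a - y⟫ ≤ ‖T a - s‖ := by
    intro g hg
    rw [hG] at hg
    simp only [Finset.mem_union, Finset.mem_image, Finset.mem_filter] at hg
    rcases hg with (((⟨j, -, rfl⟩ | ⟨j, -, rfl⟩) | ⟨i, ⟨-, hi⟩, rfl⟩) | ⟨i, ⟨-, hi⟩, rfl⟩)
    · rw [hinner_u, map_sub, hyT]
      exact (le_abs_self _).trans (habs (T a - s) j)
    · rw [inner_neg_left, hinner_u, map_sub, hyT]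
      exact (neg_le_abs _).trans (habs (T a - s) j)
    · rw [hinner_e]
      have h1 : (a - y) i = a i - lam := by rw [show (a - y) i = a i - y i from rfl, hi]
      have h2 : a i ≤ lam := (le_abs_self _).trans (ha i)
      rw [h1]
      have : a i - lam ≤ 0 := by linarith
      exact this.trans (norm_nonneg _)
    · rw [inner_neg_left, hinner_e]
      have h1 : (a - y) i = a i + lam := by
        rw [show (a - y) i = a i - y i from rfl, hi]; ring
      have h2 : -lam ≤ a i := (neg_le_of_abs_le (ha i))
      rw [h1]
      have : -(a i + lam) ≤ 0 := by linarith
      exact this.trans (norm_nonneg _)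
  have hv2 : ‖a - y‖ ^ 2 ≤ (∑ g ∈ s', c g) * ‖T a - s‖ := by
    have hsq : ‖a - y‖ ^ 2 = ⟪a - y, a - y⟫ := (real_inner_self_eq_norm_sq _).symm
    have hre : ⟪a - y, a - y⟫ = ⟪(∑ g ∈ s', c g • g : EuclideanSpace ℝ (Fin m)), a - y⟫ := by
      rw [hcsum]
    rw [hsq, hre, sum_inner]
    calc ∑ g ∈ s', ⟪c g • g, a - y⟫ = ∑ g ∈ s', c g * ⟪g, a - y⟫ :=
          Finset.sum_congr rfl fun g _ => real_inner_smul_left _ _ _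
      _ ≤ ∑ g ∈ s', c g * ‖T a - s‖ := Finset.sum_le_sum fun g hg =>
          mul_le_mul_of_nonneg_left (hip g (hs'G hg)) (hc0 g hg)
      _ = (∑ g ∈ s', c g) * ‖T a - s‖ := by rw [Finset.sum_mul]
  have hsum_le : (∑ g ∈ s', c g) ≤ θ * ‖a - y‖ := by
    have h := hθ s' (hs'G.trans hGU) hind c hc0
    rwa [hcsum] at h
  have hdist : Metric.infDist a Ω ≤ ‖a - y‖ := by
    simpa [dist_eq_norm] using Metric.infDist_le_dist_of_mem hyΩ
  by_cases hv0 : ‖a - y‖ = 0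
  · rw [hv0] at hdist
    have : 0 ≤ θ * ‖T a - s‖ := mul_nonneg hθ0.le (norm_nonneg _)
    linarith
  · have hvpos : 0 < ‖a - y‖ := lt_of_le_of_ne (norm_nonneg _) (Ne.symm hv0)
    have hkey : ‖a - y‖ ≤ θ * ‖T a - s‖ := by
      nlinarith [mul_le_mul_of_nonneg_right hsum_le (norm_nonneg (T a - s))]
    linarith

/-- there exists `θ > 0`, depending only on `D`, such that for every
`α ∈ B∞(λ)`, `dist(α, Ω*) ≤ θ ‖Dᵀα − s*‖`, where `s*` is the common value of `Dᵀα*`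
over `α* ∈ Ω*`. -/
theorem dual_distance_bound
    (d m : ℕ) (hd : 0 < d) (hm : 0 < m)
    (f : EuclideanSpace ℝ (Fin d) → ℝ)
    (f' : EuclideanSpace ℝ (Fin d) → EuclideanSpace ℝ (Fin d))
    (μ ℓ : ℝ) (hμ : 0 < μ) (hμℓ : μ ≤ ℓ)
    (hconv : ConvexOn ℝ Set.univ f)
    (hgrad : ∀ x, HasGradientAt f (f' x) x)
    (hsc : ∀ β₁ β₂ : EuclideanSpace ℝ (Fin d),
      μ * ‖β₁ - β₂‖ ^ 2 ≤ ⟪f' β₁ - f' β₂, β₁ - β₂⟫)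
    (hlip : ∀ β₁ β₂ : EuclideanSpace ℝ (Fin d),
      ‖f' β₁ - f' β₂‖ ≤ ℓ * ‖β₁ - β₂‖)
    (D : Matrix (Fin m) (Fin d) ℝ) (lam : ℝ) (hlam : 0 < lam)
    (fstar : EuclideanSpace ℝ (Fin d) → ℝ)
    (hfstar : ∀ x, IsLUB (Set.range fun β => ⟪x, β⟫ - f β) (fstar x))
    (fbar : EuclideanSpace ℝ (Fin m) → ℝ)
    (hfbar : ∀ a, fbar a = fstar (Matrix.toEuclideanLin (𝕜 := ℝ) Dᵀ a))
    (Ω : Set (EuclideanSpace ℝ (Fin m)))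
    (hΩ : Ω = {a | a ∈ BinfBall m lam ∧ ∀ a' ∈ BinfBall m lam, fbar a ≤ fbar a'})
    (s : EuclideanSpace ℝ (Fin d))
    (hs : ∀ a ∈ Ω, Matrix.toEuclideanLin (𝕜 := ℝ) Dᵀ a = s) :
    ∃ θ : ℝ, 0 < θ ∧
      ∀ a ∈ BinfBall m lam,
        Metric.infDist a Ω ≤ θ * ‖Matrix.toEuclideanLin (𝕜 := ℝ) Dᵀ a - s‖ := by
  by_cases hne : Ω.Nonempty
  · have hΩeq : Ω = {a | a ∈ BinfBall m lam ∧ Matrix.toEuclideanLin (𝕜 := ℝ) Dᵀ a = s} := by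
      obtain ⟨b, hb⟩ := hne
      have hb' := hb
      rw [hΩ] at hb'
      ext x
      constructor
      · intro hx
        have hx' := hx
        rw [hΩ] at hx'
        exact ⟨hx'.1, hs x hx⟩
      · rintro ⟨hxB, hxT⟩
        rw [hΩ]
        refine ⟨hxB, fun a' ha' => ?_⟩
        have h1 : fbar x = fbar b := by
          rw [hfbar, hfbar, hxT, hs b hb]
        rw [h1]
        exact hb'.2 a' ha'
    exact hoffman_bound m d hm D lam hlam s Ω hΩeq
  · rw [Set.not_nonempty_iff_eq_empty] at hne
    refine ⟨1, one_pos, fun a _ => ?_⟩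
    rw [hne]
    simpa [Metric.infDist_empty] using norm_nonneg _
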